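/- Let (X, ω) be a symplectic vector space and (λ, μ) a Fredholm pair of Lagrangian subspaces with index 0. Then there exists a Lagrangian subspace μ̃ of X with X = λ ⊕ μ̃ and dim μ/(μ ∩ μ̃) = dim μ̃/(μ ∩ μ̃) = dim(λ ∩ μ). -/

import Mathlib

universe u

/-- The annihilator `λ^ω = {y ∈ X : ω(x,y) = 0 for all x ∈ λ}` of a subspace of a
complex vector space with a sesquilinear form `ω` (linear in the first,
conjugate-linear in the second variable). -/
noncomputable def ann {X : Type*} [AddCommGroup X] [Module ℂ X]
    (ω : X →ₗ[ℂ] X →ₗ⋆[ℂ] ℂ) (l : Submodule ℂ X) : Submodule ℂ X :=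
  ⨅ x ∈ l, LinearMap.ker (ω x)

lemma mem_ann {X : Type*} [AddCommGroup X] [Module ℂ X]
    (ω : X →ₗ[ℂ] X →ₗ⋆[ℂ] ℂ) (l : Submodule ℂ X) (x : X) :
    x ∈ ann ω l ↔ ∀ y ∈ l, ω y x = 0 := by
  simp [ann, Submodule.mem_iInf, LinearMap.mem_ker]

def conjComp {W : Type*} [AddCommGroup W] [Module ℂ W] (h : W →ₗ[ℂ] ℂ) :
    W →ₗ⋆[ℂ] ℂ where
  toFun x := (starRingEnd ℂ) (h x)
  map_add' x y := by simp
  map_smul' c x := by simp [mul_comm]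

noncomputable def evalMap {W : Type*} [AddCommGroup W] [Module ℂ W] {ι : Type*}
    (b : Module.Basis ι ℂ W) : (W →ₗ⋆[ℂ] ℂ) →ₗ[ℂ] (ι → ℂ) where
  toFun f i := f (b i)
  map_add' _ _ := rfl
  map_smul' _ _ := rfl

noncomputable def conjDualEquiv {W : Type*} [AddCommGroup W] [Module ℂ W] {ι : Type*}
    [Fintype ι] (b : Module.Basis ι ℂ W) : (W →ₗ⋆[ℂ] ℂ) ≃ₗ[ℂ] (ι → ℂ) :=
  LinearEquiv.ofBijective (evalMap b)
    ⟨fun f g hfg => b.ext fun i => congrFun hfg i,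
     fun g => ⟨conjComp (b.constr ℂ fun i => (starRingEnd ℂ) (g i)), by
        funext i
        show (starRingEnd ℂ) ((b.constr ℂ fun i => (starRingEnd ℂ) (g i)) (b i)) = g i
        rw [Module.Basis.constr_basis]
        simp⟩⟩

/-- For a Fredholm pair `(λ,μ)` of Lagrangian subspaces of index `0`,
there exists a Lagrangian `μ̃` with `X = λ ⊕ μ̃` and
`dim μ/(μ∩μ̃) = dim μ̃/(μ∩μ̃) = dim (λ∩μ)`. -/
theorem exists_complementary_lagrangian {X : Type*} [AddCommGroup X] [Module ℂ X]
    (ω : X →ₗ[ℂ] X →ₗ⋆[ℂ] ℂ)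
    (hskew : ∀ x y, ω y x = - (starRingEnd ℂ) (ω x y))
    (hnd : ∀ x, (∀ y, ω x y = 0) → x = 0)
    (l m : Submodule ℂ X)
    (hl : l = ann ω l) (hm : m = ann ω m)
    [FiniteDimensional ℂ ↥(l ⊓ m)] [FiniteDimensional ℂ (X ⧸ (l ⊔ m))]
    (hidx : Module.finrank ℂ ↥(l ⊓ m) = Module.finrank ℂ (X ⧸ (l ⊔ m))) :
    ∃ t : Submodule ℂ X, t = ann ω t ∧ IsCompl l t ∧
      Module.rank ℂ ↥(m.map (m ⊓ t).mkQ) = Module.rank ℂ ↥(l ⊓ m) ∧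
      Module.rank ℂ ↥(t.map (m ⊓ t).mkQ) = Module.rank ℂ ↥(l ⊓ m) := by
  classical
  -- basic consequences of skew-symmetry
  have hflip0 : ∀ x y : X, ω x y = 0 → ω y x = 0 := by
    intro x y h; rw [hskew x y, h]; simp
  have hlag : ∀ (p : Submodule ℂ X), p = ann ω p → ∀ x ∈ p, ∀ y ∈ p, ω x y = 0 := by
    intro p hp x hx y hy
    exact (mem_ann ω p y).mp (hp ▸ hy) x hx
  have hVmem : ∀ v : X, v ∈ l ⊓ m ↔ ∀ y ∈ l ⊔ m, ω y v = 0 := by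
    intro v
    constructor
    · rintro ⟨hvl, hvm⟩ y hy
      rcases Submodule.mem_sup.mp hy with ⟨a, ha, b, hb, rfl⟩
      rw [map_add, LinearMap.add_apply,
        (mem_ann ω l v).mp (hl ▸ hvl) a ha, (mem_ann ω m v).mp (hm ▸ hvm) b hb, add_zero]
    · intro h
      constructor
      · have : v ∈ ann ω l := (mem_ann ω l v).mpr fun y hy => h y (Submodule.mem_sup_left hy)
        rwa [← hl] at this
      · have : v ∈ ann ω m := (mem_ann ω m v).mpr fun y hy => h y (Submodule.mem_sup_right hy)
        rwa [← hm] at this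
  -- a complement W₀ of l ⊔ m
  obtain ⟨W₀, hW₀⟩ := Submodule.exists_isCompl (l ⊔ m)
  let eQ : (X ⧸ (l ⊔ m)) ≃ₗ[ℂ] W₀ := Submodule.quotientEquivOfIsCompl _ _ hW₀
  haveI : FiniteDimensional ℂ W₀ := Module.Finite.equiv eQ
  have hdimW₀ : Module.finrank ℂ W₀ = Module.finrank ℂ ↥(l ⊓ m) :=
    (eQ.finrank_eq).symm.trans hidx.symm
  -- the pairing between l ⊓ m and W₀ is left-nondegenerate
  have hpairL : ∀ v : ↥(l ⊓ m), (∀ w : W₀, ω ↑v ↑w = 0) → v = 0 := by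
    intro v hv
    refine Subtype.ext (hnd ↑v ?_)
    intro y
    have hy : y ∈ (l ⊔ m) ⊔ W₀ := by rw [hW₀.codisjoint.eq_top]; trivial
    rcases Submodule.mem_sup.mp hy with ⟨p, hp, w, hw, rfl⟩
    rw [map_add, hflip0 p ↑v ((hVmem ↑v).mp v.2 p hp), hv ⟨w, hw⟩, add_zero]
  -- the conjugate dual of W₀
  let b := Module.finBasis ℂ W₀
  let E := conjDualEquiv b
  haveI : FiniteDimensional ℂ (W₀ →ₗ⋆[ℂ] ℂ) := Module.Finite.equiv E.symm
  have hdimD : Module.finrank ℂ (W₀ →ₗ⋆[ℂ] ℂ) = Module.finrank ℂ W₀ := by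
    rw [E.finrank_eq]; simp
  -- the pairing map Φ
  let Φ : ↥(l ⊓ m) →ₗ[ℂ] (W₀ →ₗ⋆[ℂ] ℂ) :=
    { toFun := fun v => (ω ↑v).comp W₀.subtype
      map_add' := fun v w => by ext x; simp
      map_smul' := fun c v => by ext x; simp }
  have hΦapp : ∀ (v : ↥(l ⊓ m)) (w : W₀), Φ v w = ω ↑v ↑w := fun v w => rfl
  have hΦinj : Function.Injective Φ := by
    rw [← LinearMap.ker_eq_bot, eq_bot_iff]
    intro v hv
    have h0 : Φ v = 0 := LinearMap.mem_ker.mp hv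
    have : ∀ w : W₀, ω ↑v ↑w = 0 := fun w => by
      rw [← hΦapp v w, h0]; rfl
    exact Submodule.mem_bot ℂ |>.mpr (hpairL v this)
  have hΦsurj : Function.Surjective Φ := by
    rw [← LinearMap.range_eq_top]
    apply Submodule.eq_top_of_finrank_eq
    rw [LinearMap.finrank_range_of_inj hΦinj, hdimD, hdimW₀]
  let ΦE := LinearEquiv.ofBijective Φ ⟨hΦinj, hΦsurj⟩
  -- the correction map r and the modified complement ψ
  let halfB : W₀ →ₗ[ℂ] (W₀ →ₗ⋆[ℂ] ℂ) :=
    { toFun := fun w => (2⁻¹ : ℂ) • ((ω ↑w).comp W₀.subtype)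
      map_add' := fun v w => by ext x; simp; ring
      map_smul' := fun c v => by ext x; simp; ring }
  let r : W₀ →ₗ[ℂ] ↥(l ⊓ m) := (ΦE.symm : (W₀ →ₗ⋆[ℂ] ℂ) →ₗ[ℂ] ↥(l ⊓ m)).comp halfB
  have hr : ∀ w w' : W₀, ω ↑(r w) ↑w' = 2⁻¹ * ω ↑w ↑w' := by
    intro w w'
    have h1 : Φ (r w) = halfB w := ΦE.apply_symm_apply (halfB w)
    have h2 := DFunLike.congr_fun h1 w'
    rw [hΦapp] at h2
    simpa [halfB, smul_eq_mul] using h2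
  let ψ : W₀ →ₗ[ℂ] X := W₀.subtype - (l ⊓ m).subtype.comp r
  have hψ : ∀ w : W₀, ψ w = ↑w - ↑(r w) := fun w => rfl
  have hVV : ∀ (a b : ↥(l ⊓ m)), ω ↑a ↑b = 0 := fun a b =>
    hlag l hl ↑a a.2.1 ↑b b.2.1
  have hψV : ∀ (v : ↥(l ⊓ m)) (w : W₀), ω ↑v (ψ w) = ω ↑v ↑w := by
    intro v w; rw [hψ, map_sub, hVV v (r w), sub_zero]
  have hsecond : ∀ w w' : W₀, ω ↑w ↑(r w') = 2⁻¹ * ω ↑w ↑w' := by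
    intro w w'
    rw [hskew ((r w' : X)) ↑w, hr w' w, map_mul, hskew ↑w ↑w']
    simp [Complex.conj_inv, map_ofNat]
  have hWiso : ∀ w w' : W₀, ω (ψ w) (ψ w') = 0 := by
    intro w w'
    have e1 : ω (ψ w) (ψ w') =
        ω ↑w ↑w' - ω ↑(r w) ↑w' - (ω ↑w ↑(r w') - ω ↑(r w) ↑(r w')) := by
      rw [hψ, hψ]; simp [map_sub, LinearMap.sub_apply]
    rw [e1, hr, hsecond, hVV]
    ring
  let W := LinearMap.range ψ
  have hWlm : ∀ w : W₀, (ψ w : X) ∈ l ⊔ m → w = 0 := by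
    intro w hw
    have h1 : (↑w : X) = ψ w + ↑(r w) := by rw [hψ]; abel
    have h2 : (↑w : X) ∈ l ⊔ m := by
      rw [h1]
      exact add_mem hw ((le_trans inf_le_left le_sup_left : l ⊓ m ≤ l ⊔ m) (r w).2)
    have h0 : (↑w : X) ∈ (l ⊔ m) ⊓ W₀ := ⟨h2, w.2⟩
    rw [hW₀.inf_eq_bot] at h0
    exact Subtype.ext (Submodule.mem_bot ℂ |>.mp h0)
  have hψinj : Function.Injective ψ := by
    rw [← LinearMap.ker_eq_bot, eq_bot_iff]
    intro w hw
    have : ψ w = 0 := LinearMap.mem_ker.mp hw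
    exact Submodule.mem_bot ℂ |>.mpr (hWlm w (this ▸ zero_mem _))
  have hcompl2 : IsCompl (l ⊔ m) W := by
    constructor
    · rw [disjoint_iff, eq_bot_iff]
      rintro x ⟨hx1, hx2⟩
      obtain ⟨w, rfl⟩ := hx2
      rw [hWlm w hx1, map_zero]
      exact zero_mem _
    · rw [codisjoint_iff, eq_top_iff]
      intro x _
      have hx : x ∈ (l ⊔ m) ⊔ W₀ := by rw [hW₀.codisjoint.eq_top]; trivial
      rcases Submodule.mem_sup.mp hx with ⟨p, hp, w, hw, rfl⟩
      have he : p + w = (p + ↑(r ⟨w, hw⟩)) + ψ ⟨w, hw⟩ := by rw [hψ]; abel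
      rw [he]
      exact Submodule.add_mem _
        (Submodule.mem_sup_left
          (add_mem hp ((le_trans inf_le_left le_sup_left : l ⊓ m ≤ l ⊔ m) (r ⟨w, hw⟩).2)))
        (Submodule.mem_sup_right ⟨⟨w, hw⟩, rfl⟩)
  -- the symplectic reduction Y = (V ⊕ W)^ω
  have hYmem : ∀ y, y ∈ ann ω ((l ⊓ m) ⊔ W) ↔
      ((∀ v : ↥(l ⊓ m), ω ↑v y = 0) ∧ ∀ w : W₀, ω (ψ w) y = 0) := by
    intro y; rw [mem_ann]
    constructor
    · intro h
      exact ⟨fun v => h ↑v (Submodule.mem_sup_left v.2),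
        fun w => h (ψ w) (Submodule.mem_sup_right ⟨w, rfl⟩)⟩
    · rintro ⟨h1, h2⟩ s hs
      rcases Submodule.mem_sup.mp hs with ⟨a, ha, c, hc, rfl⟩
      obtain ⟨w, rfl⟩ := hc
      rw [map_add, LinearMap.add_apply, h1 ⟨a, ha⟩, h2 w, add_zero]
  have hVY : ∀ v : X, v ∈ l ⊓ m → v ∈ ann ω ((l ⊓ m) ⊔ W) → v = 0 := by
    intro v hv hY
    have h2 := ((hYmem v).mp hY).2
    have := hpairL ⟨v, hv⟩ (fun w => by
      rw [← hψV ⟨v, hv⟩ w]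
      exact hflip0 _ _ (h2 w))
    exact congrArg Subtype.val this
  -- decomposition of Lagrangians containing l ⊓ m
  have hdecomp : ∀ (p : Submodule ℂ X), p = ann ω p → l ⊓ m ≤ p →
      p ≤ (l ⊓ m) ⊔ (p ⊓ ann ω ((l ⊓ m) ⊔ W)) := by
    intro p hp hVp x hx
    let F : W₀ →ₗ⋆[ℂ] ℂ := (ω x).comp ψ
    let v : ↥(l ⊓ m) := ΦE.symm F
    have hv : ∀ w : W₀, ω ↑v ↑w = ω x (ψ w) := by
      intro w
      have h1 : Φ v = F := ΦE.apply_symm_apply F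
      have h2 := DFunLike.congr_fun h1 w
      rw [hΦapp] at h2
      exact h2
    have hxv : x - ↑v ∈ p := sub_mem hx (hVp v.2)
    refine Submodule.mem_sup.mpr ⟨↑v, v.2, x - ↑v, ⟨hxv, (hYmem _).mpr ⟨?_, ?_⟩⟩, by abel⟩
    · intro a
      exact (mem_ann ω p _).mp (hp ▸ hxv) ↑a (hVp a.2)
    · intro w
      apply hflip0
      have he : ω (x - ↑v) (ψ w) = ω x (ψ w) - ω ↑v (ψ w) := by
        simp [map_sub, LinearMap.sub_apply]
      rw [he, hψV v w, hv w, sub_self]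
  have hmdec : m ≤ (l ⊓ m) ⊔ (m ⊓ ann ω ((l ⊓ m) ⊔ W)) := hdecomp m hm inf_le_right
  have hldec : l ≤ (l ⊓ m) ⊔ (l ⊓ ann ω ((l ⊓ m) ⊔ W)) := hdecomp l hl inf_le_left
  set Y := ann ω ((l ⊓ m) ⊔ W) with hYdef
  set μ' := m ⊓ Y with hμ'def
  have hμ'm : μ' ≤ m := inf_le_left
  have hμ'Y : μ' ≤ Y := inf_le_right
  have hYann : ∀ y ∈ Y, ∀ w : W₀, ω (ψ w) y = 0 := fun y hy w => ((hYmem y).mp hy).2 w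
  have htlm : ∀ x ∈ μ' ⊔ W, x ∈ l ⊔ m → x ∈ μ' := by
    intro x hxt hxlm
    rcases Submodule.mem_sup.mp hxt with ⟨a, ha, c, hc, rfl⟩
    obtain ⟨w, rfl⟩ := hc
    have hψlm : (ψ w : X) ∈ l ⊔ m := by
      have he : (ψ w : X) = (a + ψ w) - a := by abel
      rw [he]
      exact sub_mem hxlm (Submodule.mem_sup_right (hμ'm ha))
    rw [hWlm w hψlm, map_zero, add_zero]
    exact ha
  have hmt : m ⊓ (μ' ⊔ W) = μ' :=
    le_antisymm (fun x hx => htlm x hx.2 (Submodule.mem_sup_right hx.1))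
      (le_inf hμ'm le_sup_left)
  have hcompl : IsCompl l (μ' ⊔ W) := by
    constructor
    · rw [disjoint_iff, eq_bot_iff]
      rintro x ⟨hxl, hxt⟩
      have hxmu' : x ∈ μ' := htlm x hxt (Submodule.mem_sup_left hxl)
      have hx0 : x = 0 := hVY x ⟨hxl, hμ'm hxmu'⟩ (hμ'Y hxmu')
      simp [hx0]
    · rw [codisjoint_iff, eq_top_iff]
      have h1 : l ⊔ m ≤ l ⊔ μ' := sup_le le_sup_left
        (le_trans hmdec (sup_le (le_trans inf_le_left le_sup_left) le_sup_right))
      calc ⊤ = (l ⊔ m) ⊔ W := hcompl2.codisjoint.eq_top.symm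
        _ ≤ (l ⊔ μ') ⊔ W := sup_le_sup_right h1 W
        _ = l ⊔ (μ' ⊔ W) := sup_assoc ..
  have hmann : ∀ a ∈ m, ∀ c ∈ m, ω a c = 0 := hlag m hm
  have htiso : ∀ x ∈ μ' ⊔ W, ∀ y ∈ μ' ⊔ W, ω x y = 0 := by
    intro x hx y hy
    rcases Submodule.mem_sup.mp hx with ⟨a, ha, c, hc, rfl⟩
    obtain ⟨w, rfl⟩ := hc
    rcases Submodule.mem_sup.mp hy with ⟨a', ha', c', hc', rfl⟩
    obtain ⟨w', rfl⟩ := hc'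
    have e : ω (a + ψ w) (a' + ψ w') =
        (ω a a' + ω a (ψ w')) + (ω (ψ w) a' + ω (ψ w) (ψ w')) := by
      simp [map_add, LinearMap.add_apply]; ring
    rw [e, hmann a (hμ'm ha) a' (hμ'm ha'),
      hflip0 _ _ (hYann a (hμ'Y ha) w'), hYann a' (hμ'Y ha') w, hWiso]
    ring
  have htlag : μ' ⊔ W = ann ω (μ' ⊔ W) := by
    apply le_antisymm
    · intro x hx
      exact (mem_ann ω _ x).mpr fun y hy => htiso y hy x hx
    · intro x hx
      have hx1 : ∀ a ∈ μ', ω a x = 0 :=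
        fun a ha => (mem_ann ω _ x).mp hx a (Submodule.mem_sup_left ha)
      have hx2 : ∀ w : W₀, ω (ψ w) x = 0 :=
        fun w => (mem_ann ω _ x).mp hx (ψ w) (Submodule.mem_sup_right ⟨w, rfl⟩)
      have hxtop : x ∈ (l ⊔ m) ⊔ W := by rw [hcompl2.codisjoint.eq_top]; trivial
      rcases Submodule.mem_sup.mp hxtop with ⟨p, hp, c, hc, rfl⟩
      obtain ⟨w₀, rfl⟩ := hc
      rcases Submodule.mem_sup.mp hp with ⟨pl, hpl, pm, hpm, rfl⟩
      rcases Submodule.mem_sup.mp (hldec hpl) with ⟨v₁, hv₁, xlam, hxlam, rfl⟩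
      rcases Submodule.mem_sup.mp (hmdec hpm) with ⟨v₂, hv₂, xmu, hxmu, rfl⟩
      have hxlaml : xlam ∈ l := hxlam.1
      have hxlamY : xlam ∈ Y := hxlam.2
      have hv12 : v₁ + v₂ ∈ l ⊓ m := add_mem hv₁ hv₂
      have hstep1 : ∀ a ∈ m, ω a xlam = 0 := by
        intro a ham
        rcases Submodule.mem_sup.mp (hmdec ham) with ⟨va, hva, amu, hamu, rfl⟩
        have h1 : ω va xlam = 0 := (mem_ann ω l xlam).mp (hl ▸ hxlaml) va hva.1
        have h2 : ω amu xlam = 0 := by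
          have hz := hx1 amu hamu
          have e : ω amu (v₁ + xlam + (v₂ + xmu) + ψ w₀) =
              ω amu v₁ + ω amu xlam + (ω amu v₂ + ω amu xmu) + ω amu (ψ w₀) := by
            simp [map_add]
          have hω1 : ω amu v₁ = 0 :=
            (mem_ann ω m v₁).mp (hm ▸ hv₁.2) amu (hμ'm hamu)
          have hω2 : ω amu v₂ = 0 :=
            (mem_ann ω m v₂).mp (hm ▸ hv₂.2) amu (hμ'm hamu)
          have hω3 : ω amu xmu = 0 :=
            (mem_ann ω m xmu).mp (hm ▸ hμ'm hxmu) amu (hμ'm hamu)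
          have hω4 : ω amu (ψ w₀) = 0 := hflip0 _ _ (hYann amu (hμ'Y hamu) w₀)
          rw [e, hω1, hω2, hω3, hω4] at hz
          simpa using hz
        rw [map_add, LinearMap.add_apply, h1, h2, add_zero]
      have hxlam0 : xlam = 0 := by
        have hxlm2 : xlam ∈ m := by
          rw [hm]; exact (mem_ann ω m xlam).mpr hstep1
        exact hVY xlam ⟨hxlaml, hxlm2⟩ hxlamY
      have hv0 : v₁ + v₂ = 0 := by
        have hkey : ∀ w : W₀, ω (ψ w) (v₁ + v₂) = 0 := by
          intro w
          have hz := hx2 w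
          have e : ω (ψ w) (v₁ + xlam + (v₂ + xmu) + ψ w₀) =
              ω (ψ w) (v₁ + v₂) + ω (ψ w) xlam + ω (ψ w) xmu + ω (ψ w) (ψ w₀) := by
            simp [map_add]; ring
          rw [e, hYann xlam hxlamY w, hYann xmu (hμ'Y hxmu) w, hWiso] at hz
          simpa using hz
        have h0 : (⟨v₁ + v₂, hv12⟩ : ↥(l ⊓ m)) = 0 := hpairL _ (fun w => by
          rw [← hψV ⟨v₁ + v₂, hv12⟩ w]
          exact hflip0 _ _ (hkey w))
        exact Subtype.ext_iff.mp h0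
      have hxfin : v₁ + xlam + (v₂ + xmu) + ψ w₀ = xmu + ψ w₀ := by
        have he : v₁ + xlam + (v₂ + xmu) + ψ w₀ = (v₁ + v₂) + xlam + xmu + ψ w₀ := by abel
        rw [he, hv0, hxlam0]
        abel
      rw [hxfin]
      exact Submodule.add_mem _ (Submodule.mem_sup_left hxmu)
        (Submodule.mem_sup_right ⟨w₀, rfl⟩)
  have hrank : ∀ (p : Submodule ℂ X), (∀ x ∈ p, x ∈ μ' → x = 0) →
      Module.rank ℂ ↥(p.map μ'.mkQ) = Module.rank ℂ ↥p := by
    intro p hp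
    let g := μ'.mkQ.comp p.subtype
    have hg : Function.Injective g := by
      rw [← LinearMap.ker_eq_bot, eq_bot_iff]
      intro x hxk
      have h1 : μ'.mkQ ↑x = 0 := LinearMap.mem_ker.mp hxk
      rw [Submodule.mkQ_apply, Submodule.Quotient.mk_eq_zero] at h1
      exact Submodule.mem_bot ℂ |>.mpr (Subtype.ext (hp ↑x x.2 h1))
    have hrg : LinearMap.range g = p.map μ'.mkQ := by
      rw [LinearMap.range_comp, Submodule.range_subtype]
    rw [← hrg]
    exact ((LinearEquiv.ofInjective g hg).rank_eq).symm
  have hrankV : Module.rank ℂ ↥((l ⊓ m).map μ'.mkQ) = Module.rank ℂ ↥(l ⊓ m) :=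
    hrank (l ⊓ m) (fun x hx hx' => hVY x hx (hμ'Y hx'))
  have hrankW : Module.rank ℂ ↥(W.map μ'.mkQ) = Module.rank ℂ ↥W :=
    hrank W (fun x hx hx' => by
      obtain ⟨w, rfl⟩ := hx
      rw [hWlm w (Submodule.mem_sup_right (hμ'm hx') : (ψ w : X) ∈ l ⊔ m), map_zero])
  have hmap1 : m.map μ'.mkQ = (l ⊓ m).map μ'.mkQ := by
    apply le_antisymm
    · rintro y ⟨x, hx, rfl⟩
      rcases Submodule.mem_sup.mp (hmdec hx) with ⟨a, ha, c, hc, rfl⟩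
      have hc0 : μ'.mkQ c = 0 := by
        rw [Submodule.mkQ_apply, Submodule.Quotient.mk_eq_zero]; exact hc
      rw [map_add, hc0, add_zero]
      exact Submodule.mem_map_of_mem ha
    · exact Submodule.map_mono inf_le_right
  have hmap2 : (μ' ⊔ W).map μ'.mkQ = W.map μ'.mkQ := by
    rw [Submodule.map_sup]
    have hb : μ'.map μ'.mkQ = ⊥ := by
      rw [eq_bot_iff]; rintro y ⟨x, hx, rfl⟩
      simpa [Submodule.mem_bot, Submodule.mkQ_apply, Submodule.Quotient.mk_eq_zero] using hx
    rw [hb, bot_sup_eq]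
  have hrankWV : Module.rank ℂ ↥W = Module.rank ℂ ↥(l ⊓ m) := by
    have h1 : Module.rank ℂ ↥W₀ = Module.rank ℂ ↥W :=
      (LinearEquiv.ofInjective ψ hψinj).rank_eq
    have h2 : Module.rank ℂ (X ⧸ (l ⊔ m)) = Module.rank ℂ ↥W₀ := eQ.rank_eq
    have h3 : (Module.finrank ℂ ↥(l ⊓ m) : Cardinal) = Module.rank ℂ ↥(l ⊓ m) :=
      Module.finrank_eq_rank ℂ _
    have h4 : (Module.finrank ℂ (X ⧸ (l ⊔ m)) : Cardinal) =
        Module.rank ℂ (X ⧸ (l ⊔ m)) := Module.finrank_eq_rank ℂ _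
    rw [← h1, ← h2, ← h3, ← h4, hidx]
  refine ⟨μ' ⊔ W, htlag, hcompl, ?_, ?_⟩
  · rw [hmt, hmap1, hrankV]
  · rw [hmt, hmap2, hrankW, hrankWV]
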